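/- For the SCSC iterates, for every integer t ≥ 1 and every real c > 0, E_A‖y_{t+1} − g_S(x_t)‖² ≤ (c/e)^c · (tβ)^{−c} · E_A‖y_1 − g_S(x_0)‖² + L_f²·L_g⁴·η²·β^{−1} + 2·V_g·β. -/

import Mathlib

open MeasureTheory
open scoped ENNReal

lemma scsc_exp_bound {c s : ℝ} (hc : 0 < c) (hs : 0 < s) :
    Real.exp (-s) ≤ (c / Real.exp 1) ^ c * s ^ (-c) := by
  have h1 : Real.log (s / c) ≤ s / c - 1 := Real.log_le_sub_one_of_pos (by positivity)
  have h2 : c * Real.log (s / c) ≤ c * (s / c - 1) :=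
    mul_le_mul_of_nonneg_left h1 hc.le
  have hcs : c * (s / c - 1) = s - c := by field_simp
  have hrw : (c / Real.exp 1) ^ c * s ^ (-c)
      = Real.exp (Real.log (c / Real.exp 1) * c + Real.log s * (-c)) := by
    rw [Real.exp_add, ← Real.rpow_def_of_pos (by positivity), ← Real.rpow_def_of_pos hs]
  rw [hrw]
  apply Real.exp_le_exp.2
  have h3 : Real.log (c / Real.exp 1) = Real.log c - 1 := by
    rw [Real.log_div hc.ne' (Real.exp_ne_zero 1), Real.log_exp]
  have hlog : Real.log (s / c) = Real.log s - Real.log c := Real.log_div hs.ne' hc.ne'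
  rw [h3]
  nlinarith [h2, hcs, hlog]

section var
variable {F : Type*} [NormedAddCommGroup F] [InnerProductSpace ℝ F]

lemma scsc_variance_le {m : ℕ} (w : Fin m → F) :
    ∑ b, ‖w b - (m : ℝ)⁻¹ • ∑ c, w c‖ ^ 2 ≤ ∑ b, ‖w b‖ ^ 2 := by
  rcases Nat.eq_zero_or_pos m with hm | hm
  · subst hm; simp
  set μ : F := (m : ℝ)⁻¹ • ∑ c, w c with hμ
  have hsum : ∑ b, (w b) = (m : ℝ) • μ := by
    rw [hμ, smul_smul]
    rw [mul_inv_cancel₀ (by exact_mod_cast hm.ne'), one_smul]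
  have key : ∀ b, ‖w b - μ‖ ^ 2 = ‖w b‖ ^ 2 - 2 * inner ℝ (w b) μ + ‖μ‖ ^ 2 := by
    intro b
    rw [← real_inner_self_eq_norm_sq, ← real_inner_self_eq_norm_sq, ← real_inner_self_eq_norm_sq]
    simp only [inner_sub_sub_self]
    rw [real_inner_comm μ (w b)]
    ring
  have h3 : ∑ b, (2:ℝ) * inner ℝ (w b) μ = 2 * ((m:ℝ) * ‖μ‖^2) := by
    rw [← Finset.mul_sum, ← sum_inner, hsum, real_inner_smul_left, real_inner_self_eq_norm_sq]
  have hc : 0 ≤ (m : ℝ) * ‖μ‖ ^ 2 := by positivity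
  calc ∑ b, ‖w b - μ‖ ^ 2
      = ∑ b, (‖w b‖ ^ 2 - 2 * inner ℝ (w b) μ + ‖μ‖ ^ 2) :=
        Finset.sum_congr rfl (fun b _ => key b)
    _ = ∑ b, ‖w b‖ ^ 2 - 2 * ((m:ℝ) * ‖μ‖^2) + (m:ℝ) * ‖μ‖^2 := by
        rw [Finset.sum_add_distrib, Finset.sum_sub_distrib, h3, Finset.sum_const,
          Finset.card_univ, Fintype.card_fin, nsmul_eq_mul]
    _ = ∑ b, ‖w b‖ ^ 2 - (m:ℝ) * ‖μ‖ ^ 2 := by ring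
    _ ≤ ∑ b, ‖w b‖ ^ 2 := by linarith

lemma scsc_proj_le {E : Type*} [NormedAddCommGroup E] [InnerProductSpace ℝ E] [CompleteSpace E]
    {X : Set E} (hXconv : Convex ℝ X)
    (proj : E → E) (hproj : ∀ z, proj z ∈ X ∧ ∀ w ∈ X, dist (proj z) z ≤ dist w z)
    (u : E) {w : E} (hw : w ∈ X) : ‖proj u - w‖ ≤ ‖u - w‖ := by
  have hne : Nonempty X := ⟨⟨proj u, (hproj u).1⟩⟩
  have hinf : ‖u - proj u‖ = ⨅ v : X, ‖u - v‖ := by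
    apply le_antisymm
    · apply le_ciInf
      intro v
      have := (hproj u).2 v v.2
      rwa [dist_eq_norm, dist_eq_norm, norm_sub_rev, norm_sub_rev (v : E)] at this
    · exact ciInf_le ⟨0, fun r ⟨v, hv⟩ => hv ▸ norm_nonneg _⟩ (⟨proj u, (hproj u).1⟩ : X)
  have hchar := (norm_eq_iInf_iff_real_inner_le_zero hXconv (hproj u).1).1 hinf
  have h1 : inner ℝ (u - proj u) (w - proj u) ≤ (0:ℝ) := hchar w hw
  have h2 : ‖proj u - w‖ ^ 2 ≤ ‖u - w‖ * ‖proj u - w‖ := by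
    have expand : ‖proj u - w‖ ^ 2
        = @inner ℝ E _ (proj u - u) (proj u - w) + @inner ℝ E _ (u - w) (proj u - w) := by
      rw [← inner_add_left, ← real_inner_self_eq_norm_sq]
      congr 1
      abel
    have e1 : @inner ℝ E _ (proj u - u) (proj u - w) ≤ (0:ℝ) := by
      have : @inner ℝ E _ (proj u - u) (proj u - w) = @inner ℝ E _ (u - proj u) (w - proj u) := by
        rw [← neg_sub u (proj u), ← neg_sub w (proj u), inner_neg_neg]
      rw [this]; exact h1
    have e2 : @inner ℝ E _ (u - w) (proj u - w) ≤ ‖u - w‖ * ‖proj u - w‖ :=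
      real_inner_le_norm _ _
    linarith
  rcases eq_or_lt_of_le (norm_nonneg (proj u - w)) with h0 | h0
  · rw [← h0]; positivity
  · nlinarith [h2, h0]

end var

lemma scsc_proj_nonexpansive {E : Type*} [NormedAddCommGroup E] [InnerProductSpace ℝ E]
    [CompleteSpace E] {X : Set E} (hXconv : Convex ℝ X)
    (proj : E → E) (hproj : ∀ z, proj z ∈ X ∧ ∀ w ∈ X, dist (proj z) z ≤ dist w z) :
    LipschitzWith 1 proj := by
  have hchar : ∀ u, ∀ w ∈ X, @inner ℝ E _ (u - proj u) (w - proj u) ≤ 0 := by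
    intro u
    have hne : Nonempty X := ⟨⟨proj u, (hproj u).1⟩⟩
    have hinf : ‖u - proj u‖ = ⨅ v : X, ‖u - v‖ := by
      apply le_antisymm
      · apply le_ciInf
        intro v
        have := (hproj u).2 v v.2
        rwa [dist_eq_norm, dist_eq_norm, norm_sub_rev, norm_sub_rev (v : E)] at this
      · exact ciInf_le ⟨0, fun r ⟨v, hv⟩ => hv ▸ norm_nonneg _⟩ (⟨proj u, (hproj u).1⟩ : X)
    exact (norm_eq_iInf_iff_real_inner_le_zero hXconv (hproj u).1).1 hinf
  apply LipschitzWith.of_dist_le_mul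
  intro a b
  rw [NNReal.coe_one, one_mul, dist_eq_norm, dist_eq_norm]
  have h1 : @inner ℝ E _ (a - proj a) (proj b - proj a) ≤ 0 := hchar a _ (hproj b).1
  have h2 : @inner ℝ E _ (b - proj b) (proj a - proj b) ≤ 0 := hchar b _ (hproj a).1
  have key : ‖proj a - proj b‖ ^ 2 ≤ @inner ℝ E _ (a - b) (proj a - proj b) := by
    have i1 : 0 ≤ @inner ℝ E _ (a - proj a) (proj a - proj b) := by
      have h1' := h1
      rw [show proj b - proj a = -(proj a - proj b) by abel, inner_neg_right] at h1'
      linarith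
    have idecomp : @inner ℝ E _ (a - b) (proj a - proj b)
        = @inner ℝ E _ (a - proj a) (proj a - proj b)
          - @inner ℝ E _ (b - proj b) (proj a - proj b) + ‖proj a - proj b‖ ^ 2 := by
      rw [← real_inner_self_eq_norm_sq, ← inner_sub_left, ← inner_add_left]
      congr 1
      abel
    linarith [i1, h2, idecomp]
  have hcs2 : @inner ℝ E _ (a - b) (proj a - proj b) ≤ ‖a - b‖ * ‖proj a - proj b‖ :=
    real_inner_le_norm _ _
  rcases eq_or_lt_of_le (norm_nonneg (proj a - proj b)) with h0 | h0
  · rw [← h0]; exact norm_nonneg _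
  · nlinarith [key, hcs2, h0]

lemma scsc_C_le {β Vg K : ℝ} (hβ0 : 0 < β) (hβ1 : β < 1) (hVg0 : 0 ≤ Vg) (hK0 : 0 ≤ K) :
    (2 * β ^ 2 * Vg + 2 * (1 - β) ^ 2 * K) / (β * (2 - β)) ≤ K / β + 2 * Vg * β := by
  have hden : (0:ℝ) < β * (2 - β) := by nlinarith
  rw [div_le_iff₀ hden]
  have hrhs : (K / β + 2 * Vg * β) * (β * (2 - β))
      = K * (2 - β) + 2 * Vg * β ^ 2 * (2 - β) := by
    field_simp
  rw [hrhs]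
  nlinarith [mul_nonneg hK0 (mul_nonneg hβ0.le (by linarith : (0:ℝ) ≤ 3 - 2 * β)),
    mul_nonneg (mul_nonneg hVg0 (sq_nonneg β)) (by linarith : (0:ℝ) ≤ 1 - β)]

set_option maxHeartbeats 2000000 in
/-- Tracking error of the moving-average sequence for SCSC:
for every `t ≥ 1` and every `c > 0`,
`E_A‖y_{t+1} − g_S(x_t)‖² ≤ (c/e)^c (tβ)^{−c} E_A‖y_1 − g_S(x_0)‖²
  + L_f² L_g⁴ η² β^{−1} + 2 V_g β`. -/
theorem stmt_14
    (p d n m : ℕ) (hp : 1 ≤ p) (hd : 1 ≤ d) (hn : 1 ≤ n) (hm : 1 ≤ m)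
    (X : Set (EuclideanSpace ℝ (Fin p)))
    (hXne : X.Nonempty) (hXcl : IsClosed X) (hXconv : Convex ℝ X)
    (proj : EuclideanSpace ℝ (Fin p) → EuclideanSpace ℝ (Fin p))
    (hproj : ∀ z, proj z ∈ X ∧ ∀ w ∈ X, dist (proj z) z ≤ dist w z)
    (f : Fin n → EuclideanSpace ℝ (Fin d) → ℝ)
    (g : Fin m → EuclideanSpace ℝ (Fin p) → EuclideanSpace ℝ (Fin d))
    (Lf Lg Vg η β : ℝ)
    (hLf : 0 < Lf) (hLg : 0 < Lg) (hη : 0 < η) (hβ0 : 0 < β) (hβ1 : β < 1)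
    (hfdiff : ∀ i, Differentiable ℝ (f i))
    (hgdiff : ∀ j, Differentiable ℝ (g j))
    (hflip : ∀ i y₁ y₂, |f i y₁ - f i y₂| ≤ Lf * ‖y₁ - y₂‖)
    (hglip : ∀ j x₁ x₂, ‖g j x₁ - g j x₂‖ ≤ Lg * ‖x₁ - x₂‖)
    (gS : EuclideanSpace ℝ (Fin p) → EuclideanSpace ℝ (Fin d))
    (hgS : ∀ z, gS z = (m : ℝ)⁻¹ • ∑ j, g j z)
    (hVg : ∀ z ∈ X, (m : ℝ)⁻¹ * ∑ j, ‖g j z - gS z‖ ^ 2 ≤ Vg)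
    -- random indices
    (Ω : Type) [MeasurableSpace Ω] (μ : Measure Ω) [IsProbabilityMeasure μ]
    (I : ℕ → Ω → Fin n) (J : ℕ → Ω → Fin m)
    (hImeas : ∀ t, Measurable (I t)) (hJmeas : ∀ t, Measurable (J t))
    (hIunif : ∀ t a, μ {ω | I t ω = a} = (n : ℝ≥0∞)⁻¹)
    (hJunif : ∀ t b, μ {ω | J t ω = b} = (m : ℝ≥0∞)⁻¹)
    (hiid : ProbabilityTheory.iIndepFun
      (fun t ω => (I t ω, J t ω)) μ)
    (hIJindep : ∀ t, ProbabilityTheory.IndepFun (I t) (J t) μ)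
    -- SCGD iterates
    (x0 : EuclideanSpace ℝ (Fin p)) (y0 : EuclideanSpace ℝ (Fin d)) (hx0 : x0 ∈ X)
    (x : ℕ → Ω → EuclideanSpace ℝ (Fin p)) (y : ℕ → Ω → EuclideanSpace ℝ (Fin d))
    (hxmeas : ∀ t, Measurable (x t)) (hymeas : ∀ t, Measurable (y t))
    (hxinit : ∀ ω, x 0 ω = x0) (hyinit : ∀ ω, y 0 ω = y0)
    (hyrec : ∀ t ω, y (t + 1) ω = (1 - β) • (y t ω + g (J t ω) (x t ω) - g (J t ω) (x (t - 1) ω)) + β • g (J t ω) (x t ω))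
    (hxrec : ∀ t ω, x (t + 1) ω = proj (x t ω - η •
      (ContinuousLinearMap.adjoint (fderiv ℝ (g (J t ω)) (x t ω))
        (gradient (f (I t ω)) (y (t + 1) ω))))) :
    ∀ t : ℕ, 1 ≤ t → ∀ c : ℝ, 0 < c →
      ∫⁻ ω, (‖y (t + 1) ω - gS (x t ω)‖₊ : ℝ≥0∞) ^ 2 ∂μ ≤
        ENNReal.ofReal ((c / Real.exp 1) ^ c * ((t : ℝ) * β) ^ (-c)) *
            ∫⁻ ω, (‖y 1 ω - gS (x 0 ω)‖₊ : ℝ≥0∞) ^ 2 ∂μ +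
          ENNReal.ofReal (Lf ^ 2 * Lg ^ 4 * η ^ 2 / β + 2 * Vg * β) := by
  classical
  have hm0 : (0:ℝ) < m := by exact_mod_cast hm
  have hβle : (0:ℝ) ≤ 1 - β := by linarith
  have hVg0 : (0:ℝ) ≤ Vg := le_trans (by positivity) (hVg x0 hx0)
  set q : ℝ := (1 - β) ^ 2 with hq
  set K : ℝ := Lf ^ 2 * Lg ^ 4 * η ^ 2 with hK
  set sc : ℝ := 2 * β ^ 2 * Vg + 2 * q * K with hsc
  set Cc : ℝ := sc / (β * (2 - β)) with hCc
  have hq0 : (0:ℝ) ≤ q := by positivity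
  have hq1 : q < 1 := by nlinarith
  have hK0 : (0:ℝ) ≤ K := by positivity
  have hsc0 : (0:ℝ) ≤ sc := by positivity
  have hden : (0:ℝ) < β * (2 - β) := by nlinarith
  have hCc0 : (0:ℝ) ≤ Cc := by positivity
  set e : ℕ → ℝ≥0∞ := fun k => ∫⁻ ω, (‖y (k + 1) ω - gS (x k ω)‖₊ : ℝ≥0∞) ^ 2 ∂μ with he
  -- continuity / measurability of basic maps
  have hgcont : ∀ j, Continuous (g j) := fun j => (hgdiff j).continuous
  have hgScont : Continuous gS := by
    have hgSfun : gS = fun z => (m : ℝ)⁻¹ • ∑ j, g j z := funext hgS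
    rw [hgSfun]
    exact (continuous_finset_sum Finset.univ fun j _ => hgcont j).const_smul ((m : ℝ)⁻¹)
  have hXmem : ∀ k ω, x k ω ∈ X := by
    intro k
    induction k with
    | zero => intro ω; rw [hxinit ω]; exact hx0
    | succ k _ => intro ω; rw [hxrec k ω]; exact (hproj _).1
  -- derivative bounds
  have hgrad : ∀ i z, ‖gradient (f i) z‖ ≤ Lf := by
    intro i z
    have hlip : LipschitzWith (Real.toNNReal Lf) (f i) := by
      apply LipschitzWith.of_dist_le_mul
      intro a b
      rw [Real.dist_eq, dist_eq_norm, Real.coe_toNNReal _ hLf.le]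
      exact hflip i a b
    have h1 : ‖fderiv ℝ (f i) z‖ ≤ Lf := by
      have := norm_fderiv_le_of_lipschitz ℝ hlip (x₀ := z)
      rwa [Real.coe_toNNReal _ hLf.le] at this
    show ‖(InnerProductSpace.toDual ℝ _).symm (fderiv ℝ (f i) z)‖ ≤ Lf
    rwa [LinearIsometryEquiv.norm_map]
  have hDgb : ∀ j z, ‖fderiv ℝ (g j) z‖ ≤ Lg := by
    intro j z
    have hlip : LipschitzWith (Real.toNNReal Lg) (g j) := by
      apply LipschitzWith.of_dist_le_mul
      intro a b
      rw [dist_eq_norm, dist_eq_norm, Real.coe_toNNReal _ hLg.le]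
      exact hglip j a b
    have := norm_fderiv_le_of_lipschitz ℝ hlip (x₀ := z)
    rwa [Real.coe_toNNReal _ hLg.le] at this
  -- step bound
  have hstep : ∀ k ω, ‖x (k + 1) ω - x k ω‖ ≤ η * (Lf * Lg) := by
    intro k ω
    rw [hxrec k ω]
    set v := (ContinuousLinearMap.adjoint (fderiv ℝ (g (J k ω)) (x k ω)))
      (gradient (f (I k ω)) (y (k + 1) ω)) with hv
    have h1 : ‖proj (x k ω - η • v) - x k ω‖ ≤ ‖(x k ω - η • v) - x k ω‖ :=
      scsc_proj_le hXconv proj hproj _ (hXmem k ω)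
    have h2 : ‖(x k ω - η • v) - x k ω‖ = η * ‖v‖ := by
      rw [sub_sub_cancel_left, norm_neg, norm_smul, Real.norm_of_nonneg hη.le]
    have h3 : ‖v‖ ≤ Lg * Lf := by
      calc ‖v‖ ≤ ‖ContinuousLinearMap.adjoint (fderiv ℝ (g (J k ω)) (x k ω))‖
            * ‖gradient (f (I k ω)) (y (k + 1) ω)‖ := ContinuousLinearMap.le_opNorm _ _
        _ = ‖fderiv ℝ (g (J k ω)) (x k ω)‖ * ‖gradient (f (I k ω)) (y (k + 1) ω)‖ := by
            rw [LinearIsometryEquiv.norm_map]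
        _ ≤ Lg * Lf := by
            apply mul_le_mul (hDgb _ _) (hgrad _ _) (norm_nonneg _) hLg.le
    rw [h2] at h1
    calc ‖proj (x k ω - η • v) - x k ω‖ ≤ η * ‖v‖ := h1
      _ ≤ η * (Lg * Lf) := by
          exact mul_le_mul_of_nonneg_left h3 hη.le
      _ = η * (Lf * Lg) := by ring
  -- nnnorm to ofReal
  have hnn : ∀ z : EuclideanSpace ℝ (Fin d), ((‖z‖₊ : ℝ≥0∞)) ^ 2 = ENNReal.ofReal (‖z‖ ^ 2) := by
    intro z
    rw [ENNReal.ofReal_pow (norm_nonneg z), ← coe_nnnorm, ENNReal.ofReal_coe_nnreal]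
  -- sigma algebra of the past
  have hpairmeas : ∀ s, Measurable (fun ω => (I s ω, J s ω)) :=
    fun s => (hImeas s).prodMk (hJmeas s)
  set 𝒢 : ℕ → MeasurableSpace Ω := fun t =>
    ⨆ s ∈ Set.Iio t, MeasurableSpace.comap (fun ω => (I s ω, J s ω)) inferInstance with h𝒢
  have h𝔪le𝒢 : ∀ s t : ℕ, s < t →
      MeasurableSpace.comap (fun ω => (I s ω, J s ω)) inferInstance ≤ 𝒢 t := by
    intro s t hst
    simp only [h𝒢]
    exact le_biSup (fun s => MeasurableSpace.comap (fun ω => (I s ω, J s ω)) inferInstance)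
      (Set.mem_Iio.mpr hst)
  have h𝒢mono : ∀ {a b : ℕ}, a ≤ b → 𝒢 a ≤ 𝒢 b := by
    intro a b hab
    conv_lhs => simp only [h𝒢]
    exact iSup₂_le fun s hs => h𝔪le𝒢 s b (lt_of_lt_of_le hs hab)
  -- fixed measurable maps
  have hgmeas2 : Measurable (fun z : (EuclideanSpace ℝ (Fin p)) × Fin m => g z.2 z.1) :=
    measurable_from_prod_countable_left (fun b => (hgcont b).measurable)
  have hDgmeas2 : Measurable (fun z : (EuclideanSpace ℝ (Fin p)) × Fin m =>
      fderiv ℝ (g z.2) z.1) :=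
    measurable_from_prod_countable_left (fun b => measurable_fderiv ℝ (g b))
  have hgradmeas2 : Measurable (fun z : (EuclideanSpace ℝ (Fin d)) × Fin n =>
      gradient (f z.2) z.1) := by
    apply measurable_from_prod_countable_left
    intro i
    show Measurable fun z => (InnerProductSpace.toDual ℝ _).symm (fderiv ℝ (f i) z)
    exact ((InnerProductSpace.toDual ℝ _).symm.continuous.measurable).comp (measurable_fderiv ℝ (f i))
  have happly : Continuous (fun z : ((EuclideanSpace ℝ (Fin p)) →L[ℝ] (EuclideanSpace ℝ (Fin d)))
      × (EuclideanSpace ℝ (Fin d)) => ContinuousLinearMap.adjoint z.1 z.2) := by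
    have h1 : Continuous (fun A : (EuclideanSpace ℝ (Fin p)) →L[ℝ] (EuclideanSpace ℝ (Fin d)) =>
        (ContinuousLinearMap.adjoint A :
          (EuclideanSpace ℝ (Fin d)) →L[ℝ] (EuclideanSpace ℝ (Fin p)))) :=
      (ContinuousLinearMap.adjoint :
        ((EuclideanSpace ℝ (Fin p)) →L[ℝ] (EuclideanSpace ℝ (Fin d))) ≃ₗᵢ⋆[ℝ]
        ((EuclideanSpace ℝ (Fin d)) →L[ℝ] (EuclideanSpace ℝ (Fin p)))).continuous
    exact isBoundedBilinearMap_apply.continuous.comp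
      ((h1.comp continuous_fst).prodMk continuous_snd)
  have hprojcont : Continuous proj := (scsc_proj_nonexpansive hXconv proj hproj).continuous
  -- iterates are measurable w.r.t. the past
  have hmeasG : ∀ t, Measurable[𝒢 t] (x t) ∧ Measurable[𝒢 t] (x (t - 1))
      ∧ Measurable[𝒢 t] (y t) := by
    intro t
    induction t with
    | zero =>
      have hx0' : x 0 = fun _ => x0 := funext hxinit
      have hy0' : y 0 = fun _ => y0 := funext hyinit
      refine ⟨?_, ?_, ?_⟩ <;> simp only [Nat.zero_sub, hx0', hy0'] <;> exact measurable_const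
    | succ k ih =>
      obtain ⟨ihx, ihx', ihy⟩ := ih
      have hxk : Measurable[𝒢 (k + 1)] (x k) := ihx.mono (h𝒢mono (Nat.le_succ k)) le_rfl
      have hxk' : Measurable[𝒢 (k + 1)] (x (k - 1)) := ihx'.mono (h𝒢mono (Nat.le_succ k)) le_rfl
      have hyk : Measurable[𝒢 (k + 1)] (y k) := ihy.mono (h𝒢mono (Nat.le_succ k)) le_rfl
      have hpairk : Measurable[𝒢 (k + 1)] (fun ω => (I k ω, J k ω)) := by
        have h1 : Measurable[MeasurableSpace.comap (fun ω => (I k ω, J k ω)) inferInstance]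
            (fun ω => (I k ω, J k ω)) := comap_measurable _
        exact h1.mono (h𝔪le𝒢 k (k + 1) (Nat.lt_succ_self k)) le_rfl
      have hJk : Measurable[𝒢 (k + 1)] (J k) := measurable_snd.comp hpairk
      have hIk : Measurable[𝒢 (k + 1)] (I k) := measurable_fst.comp hpairk
      have hgJx : ∀ (z : Ω → EuclideanSpace ℝ (Fin p)), Measurable[𝒢 (k + 1)] z →
          Measurable[𝒢 (k + 1)] (fun ω => g (J k ω) (z ω)) := by
        intro z hz
        exact hgmeas2.comp (hz.prodMk hJk)
      have hy1 : Measurable[𝒢 (k + 1)] (y (k + 1)) := by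
        have hyeq : y (k + 1) = fun ω => (1 - β) • (y k ω + g (J k ω) (x k ω)
            - g (J k ω) (x (k - 1) ω)) + β • g (J k ω) (x k ω) := funext (hyrec k)
        rw [hyeq]
        exact (((hyk.add (hgJx _ hxk)).sub (hgJx _ hxk')).const_smul (1 - β)).add
          ((hgJx _ hxk).const_smul β)
      have hx1 : Measurable[𝒢 (k + 1)] (x (k + 1)) := by
        have hxeq : x (k + 1) = fun ω => proj (x k ω - η •
            (ContinuousLinearMap.adjoint (fderiv ℝ (g (J k ω)) (x k ω))
              (gradient (f (I k ω)) (y (k + 1) ω)))) := funext (hxrec k)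
        rw [hxeq]
        have hDgω : Measurable[𝒢 (k + 1)] (fun ω => fderiv ℝ (g (J k ω)) (x k ω)) :=
          hDgmeas2.comp (hxk.prodMk hJk)
        have hgradω : Measurable[𝒢 (k + 1)]
            (fun ω => gradient (f (I k ω)) (y (k + 1) ω)) :=
          hgradmeas2.comp (hy1.prodMk hIk)
        have hvm : Measurable[𝒢 (k + 1)] (fun ω => x k ω - η •
            (ContinuousLinearMap.adjoint (fderiv ℝ (g (J k ω)) (x k ω))
              (gradient (f (I k ω)) (y (k + 1) ω)))) :=
          hxk.sub ((happly.measurable.comp (hDgω.prodMk hgradω)).const_smul η)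
        exact hprojcont.measurable.comp hvm
      refine ⟨hx1, ?_, hy1⟩
      simpa using hxk
  -- ENNReal constants
  have hmne : ((m : ℝ≥0∞)) ≠ 0 := by
    simp only [ne_eq, Nat.cast_eq_zero]
    omega
  have hmnetop : ((m : ℝ≥0∞)) ≠ ⊤ := ENNReal.natCast_ne_top m
  -- the one-step recursion
  have hrec : ∀ k, e (k + 1) ≤ ENNReal.ofReal q * e k + ENNReal.ofReal sc := by
    intro k
    -- independence of the new index from the current state
    have hIndepWJ : ProbabilityTheory.IndepFun
        (fun ω => (x (k + 1) ω, x k ω, y (k + 1) ω)) (J (k + 1)) μ := by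
      have hcompl := ProbabilityTheory.indep_biSup_compl
        (fun s => (hpairmeas s).comap_le) hiid.iIndep (Set.Iio (k + 1))
      have hWle : MeasurableSpace.comap (fun ω => (x (k + 1) ω, x k ω, y (k + 1) ω))
          inferInstance ≤ 𝒢 (k + 1) := by
        have h1 := (hmeasG (k + 1)).1
        have h2 := ((hmeasG k).1).mono (h𝒢mono (Nat.le_succ k)) le_rfl
        have h3 := (hmeasG (k + 1)).2.2
        exact (h1.prodMk (h2.prodMk h3)).comap_le
      have hJle : MeasurableSpace.comap (J (k + 1)) inferInstance ≤
          ⨆ s ∈ (Set.Iio (k + 1))ᶜ,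
            MeasurableSpace.comap (fun ω => (I s ω, J s ω)) inferInstance := by
        refine le_trans ?_ (le_biSup
          (fun s => MeasurableSpace.comap (fun ω => (I s ω, J s ω)) inferInstance)
          (by simp : (k + 1) ∈ (Set.Iio (k + 1))ᶜ))
        have hsnd : (J (k + 1)) = Prod.snd ∘ (fun ω => (I (k + 1) ω, J (k + 1) ω)) := rfl
        rw [hsnd, ← MeasurableSpace.comap_comp]
        exact MeasurableSpace.comap_mono measurable_snd.comap_le
      have h𝒢eq : 𝒢 (k + 1) = ⨆ s ∈ Set.Iio (k + 1),
          MeasurableSpace.comap (fun ω => (I s ω, J s ω)) inferInstance := by simp only [h𝒢]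
      rw [h𝒢eq] at hWle
      exact ProbabilityTheory.indep_of_indep_of_le_right
        (ProbabilityTheory.indep_of_indep_of_le_left hcompl hWle) hJle
    -- abbreviations
    set A : Ω → EuclideanSpace ℝ (Fin d) := fun ω => y (k + 1) ω - gS (x k ω) with hA
    set ζ : Fin m → Ω → EuclideanSpace ℝ (Fin d) := fun b ω =>
      (g b (x (k + 1) ω) - (1 - β) • g b (x k ω))
        - (gS (x (k + 1) ω) - (1 - β) • gS (x k ω)) with hζ
    have hdecomp : ∀ ω, y (k + 1 + 1) ω - gS (x (k + 1) ω)
        = (1 - β) • A ω + ζ (J (k + 1) ω) ω := by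
      intro ω
      have h := hyrec (k + 1) ω
      rw [Nat.add_sub_cancel] at h
      rw [h]
      simp only [hA, hζ]
      module
    have hgsum : ∀ z, ∑ b, g b z = (m : ℝ) • gS z := by
      intro z
      rw [hgS z, smul_smul, mul_inv_cancel₀ hm0.ne', one_smul]
    have hζsum : ∀ ω, ∑ b, ζ b ω = 0 := by
      intro ω
      simp only [hζ]
      rw [Finset.sum_sub_distrib, Finset.sum_sub_distrib, ← Finset.smul_sum, hgsum, hgsum,
        Finset.sum_const, Finset.card_univ, Fintype.card_fin]
      rw [show ∀ z : EuclideanSpace ℝ (Fin d), m • z = (m : ℝ) • z from fun z =>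
        (Nat.cast_smul_eq_nsmul ℝ m z).symm]
      module
    have hζdecomp : ∀ b ω, ζ b ω = β • (g b (x (k + 1) ω) - gS (x (k + 1) ω))
        + (1 - β) • ((g b (x (k + 1) ω) - g b (x k ω))
          - (gS (x (k + 1) ω) - gS (x k ω))) := by
      intro b ω
      simp only [hζ]
      module
    -- second moment of the noise
    have hζsq : ∀ ω, ∑ b, ‖ζ b ω‖ ^ 2 ≤ (m : ℝ) * sc := by
      intro ω
      have ha : ∑ b, ‖g b (x (k + 1) ω) - gS (x (k + 1) ω)‖ ^ 2 ≤ (m : ℝ) * Vg := by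
        have h1 := hVg _ (hXmem (k + 1) ω)
        have h2 := mul_le_mul_of_nonneg_left h1 hm0.le
        rwa [← mul_assoc, mul_inv_cancel₀ hm0.ne', one_mul] at h2
      have hc : ∑ b, ‖(g b (x (k + 1) ω) - g b (x k ω))
          - (gS (x (k + 1) ω) - gS (x k ω))‖ ^ 2 ≤ (m : ℝ) * K := by
        have hmean : gS (x (k + 1) ω) - gS (x k ω)
            = (m : ℝ)⁻¹ • ∑ b, (g b (x (k + 1) ω) - g b (x k ω)) := by
          rw [Finset.sum_sub_distrib, smul_sub, ← hgS, ← hgS]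
        rw [hmean]
        refine le_trans (scsc_variance_le _) ?_
        have hterm : ∀ b : Fin m, ‖g b (x (k + 1) ω) - g b (x k ω)‖ ^ 2 ≤ K := by
          intro b
          have h3 : ‖g b (x (k + 1) ω) - g b (x k ω)‖ ≤ Lg * (η * (Lf * Lg)) :=
            le_trans (hglip b _ _) (mul_le_mul_of_nonneg_left (hstep k ω) hLg.le)
          calc ‖g b (x (k + 1) ω) - g b (x k ω)‖ ^ 2 ≤ (Lg * (η * (Lf * Lg))) ^ 2 := by
                exact pow_le_pow_left₀ (norm_nonneg _) h3 2
            _ = K := by rw [hK]; ring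
        calc ∑ b, ‖g b (x (k + 1) ω) - g b (x k ω)‖ ^ 2 ≤ ∑ _b : Fin m, K :=
              Finset.sum_le_sum (fun b _ => hterm b)
          _ = (m : ℝ) * K := by
              rw [Finset.sum_const, Finset.card_univ, Fintype.card_fin, nsmul_eq_mul]
      have hb : ∀ b : Fin m, ‖ζ b ω‖ ^ 2
          ≤ 2 * β ^ 2 * ‖g b (x (k + 1) ω) - gS (x (k + 1) ω)‖ ^ 2
            + 2 * q * ‖(g b (x (k + 1) ω) - g b (x k ω))
              - (gS (x (k + 1) ω) - gS (x k ω))‖ ^ 2 := by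
        intro b
        rw [hζdecomp b ω, hq]
        set a1 := g b (x (k + 1) ω) - gS (x (k + 1) ω)
        set c1 := (g b (x (k + 1) ω) - g b (x k ω)) - (gS (x (k + 1) ω) - gS (x k ω))
        have h1 : ‖β • a1 + (1 - β) • c1‖ ≤ β * ‖a1‖ + (1 - β) * ‖c1‖ := by
          refine le_trans (norm_add_le _ _) ?_
          rw [norm_smul, norm_smul, Real.norm_of_nonneg hβ0.le, Real.norm_of_nonneg hβle]
        nlinarith [norm_nonneg a1, norm_nonneg c1, norm_nonneg (β • a1 + (1 - β) • c1),
          sq_nonneg (β * ‖a1‖ - (1 - β) * ‖c1‖), h1]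
      calc ∑ b, ‖ζ b ω‖ ^ 2
          ≤ ∑ b, (2 * β ^ 2 * ‖g b (x (k + 1) ω) - gS (x (k + 1) ω)‖ ^ 2
            + 2 * q * ‖(g b (x (k + 1) ω) - g b (x k ω))
              - (gS (x (k + 1) ω) - gS (x k ω))‖ ^ 2) :=
            Finset.sum_le_sum (fun b _ => hb b)
        _ = 2 * β ^ 2 * (∑ b, ‖g b (x (k + 1) ω) - gS (x (k + 1) ω)‖ ^ 2)
            + 2 * q * (∑ b, ‖(g b (x (k + 1) ω) - g b (x k ω))
              - (gS (x (k + 1) ω) - gS (x k ω))‖ ^ 2) := by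
            rw [Finset.sum_add_distrib, Finset.mul_sum, Finset.mul_sum]
        _ ≤ 2 * β ^ 2 * ((m : ℝ) * Vg) + 2 * q * ((m : ℝ) * K) :=
            add_le_add (mul_le_mul_of_nonneg_left ha (by positivity))
              (mul_le_mul_of_nonneg_left hc (by positivity))
        _ = (m : ℝ) * sc := by rw [hsc]; ring
    -- pointwise identity
    have hptid : ∀ ω, ∑ b, ‖(1 - β) • A ω + ζ b ω‖ ^ 2
        = (m : ℝ) * (q * ‖A ω‖ ^ 2) + ∑ b, ‖ζ b ω‖ ^ 2 := by
      intro ω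
      have expand : ∀ b : Fin m, ‖(1 - β) • A ω + ζ b ω‖ ^ 2
          = ‖(1 - β) • A ω‖ ^ 2
            + 2 * @inner ℝ _ _ ((1 - β) • A ω) (ζ b ω) + ‖ζ b ω‖ ^ 2 :=
        fun b => norm_add_sq_real _ _
      rw [Finset.sum_congr rfl (fun b _ => expand b), Finset.sum_add_distrib,
        Finset.sum_add_distrib, ← Finset.mul_sum, ← inner_sum, hζsum ω, inner_zero_right,
        mul_zero, add_zero, Finset.sum_const, Finset.card_univ, Fintype.card_fin, nsmul_eq_mul]
      have hns : ‖(1 - β) • A ω‖ ^ 2 = q * ‖A ω‖ ^ 2 := by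
        rw [norm_smul, Real.norm_of_nonneg hβle, mul_pow, hq]
      rw [hns]
    -- measure-theoretic part
    set Ψ : Fin m → Ω → ℝ≥0∞ := fun b ω =>
      ENNReal.ofReal (‖(1 - β) • A ω + ζ b ω‖ ^ 2) with hΨ
    have hAmeas : Measurable A := (hymeas (k + 1)).sub (hgScont.measurable.comp (hxmeas k))
    have hζmeas : ∀ b, Measurable (ζ b) := by
      intro b
      apply Measurable.sub
      · exact ((hgcont b).measurable.comp (hxmeas (k + 1))).sub
          (((hgcont b).measurable.comp (hxmeas k)).const_smul (1 - β))
      · exact (hgScont.measurable.comp (hxmeas (k + 1))).sub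
          ((hgScont.measurable.comp (hxmeas k)).const_smul (1 - β))
    have hΨmeas : ∀ b, Measurable (Ψ b) := by
      intro b
      exact ((((hAmeas.const_smul (1 - β)).add (hζmeas b)).norm).pow_const 2).ennreal_ofReal
    have hχmeas : ∀ b : Fin m, Measurable (fun ω => if J (k + 1) ω = b then (1:ℝ≥0∞) else 0) := by
      intro b
      exact Measurable.ite ((hJmeas (k + 1)) (measurableSet_singleton b))
        measurable_const measurable_const
    have hindΨ : ∀ b : Fin m, ProbabilityTheory.IndepFun
        (fun ω => if J (k + 1) ω = b then (1:ℝ≥0∞) else 0) (Ψ b) μ := by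
      intro b
      have hφ : Measurable (fun b' : Fin m => if b' = b then (1:ℝ≥0∞) else 0) :=
        measurable_of_countable _
      have hψm : Measurable (fun w : EuclideanSpace ℝ (Fin p) × EuclideanSpace ℝ (Fin p)
          × EuclideanSpace ℝ (Fin d) =>
          ENNReal.ofReal (‖(1 - β) • (w.2.2 - gS w.2.1)
            + ((g b w.1 - (1 - β) • g b w.2.1)
              - (gS w.1 - (1 - β) • gS w.2.1))‖ ^ 2)) := by
        have hcont : Continuous (fun w : EuclideanSpace ℝ (Fin p) × EuclideanSpace ℝ (Fin p)
            × EuclideanSpace ℝ (Fin d) => (1 - β) • (w.2.2 - gS w.2.1)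
            + ((g b w.1 - (1 - β) • g b w.2.1) - (gS w.1 - (1 - β) • gS w.2.1))) := by
          have c1 : Continuous (fun w : EuclideanSpace ℝ (Fin p) × EuclideanSpace ℝ (Fin p)
              × EuclideanSpace ℝ (Fin d) => w.1) := continuous_fst
          have c2 : Continuous (fun w : EuclideanSpace ℝ (Fin p) × EuclideanSpace ℝ (Fin p)
              × EuclideanSpace ℝ (Fin d) => w.2.1) := continuous_fst.comp continuous_snd
          have c3 : Continuous (fun w : EuclideanSpace ℝ (Fin p) × EuclideanSpace ℝ (Fin p)
              × EuclideanSpace ℝ (Fin d) => w.2.2) := continuous_snd.comp continuous_snd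
          exact (((c3.sub (hgScont.comp c2)).const_smul (1 - β)).add
            ((((hgcont b).comp c1).sub (((hgcont b).comp c2).const_smul (1 - β))).sub
              ((hgScont.comp c1).sub ((hgScont.comp c2).const_smul (1 - β)))))
        exact ((hcont.norm.measurable).pow_const 2).ennreal_ofReal
      exact hIndepWJ.symm.comp hφ hψm
    -- split the integral over the value of the fresh index
    have hsplit : (∫⁻ ω, ((‖y (k + 1 + 1) ω - gS (x (k + 1) ω)‖₊ : ℝ≥0∞)) ^ 2 ∂μ)
        = ∑ b, ∫⁻ ω, (if J (k + 1) ω = b then (1:ℝ≥0∞) else 0) * Ψ b ω ∂μ := by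
      rw [← lintegral_finset_sum _ (fun b _ => (show Measurable (fun ω => (if J (k + 1) ω = b then (1:ℝ≥0∞) else 0) * Ψ b ω) from (hχmeas b).mul (hΨmeas b)))]
      apply lintegral_congr
      intro ω
      rw [hnn, hdecomp ω]
      have hite : ∀ b : Fin m, (if J (k + 1) ω = b then (1:ℝ≥0∞) else 0) * Ψ b ω
          = if J (k + 1) ω = b then Ψ b ω else 0 := by
        intro b
        split <;> simp
      rw [Finset.sum_congr rfl (fun b _ => hite b), Finset.sum_ite_eq Finset.univ (J (k + 1) ω)
        (fun b => Ψ b ω), if_pos (Finset.mem_univ _)]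
    have hterm : ∀ b : Fin m, ∫⁻ ω, (if J (k + 1) ω = b then (1:ℝ≥0∞) else 0) * Ψ b ω ∂μ
        = (m : ℝ≥0∞)⁻¹ * ∫⁻ ω, Ψ b ω ∂μ := by
      intro b
      have h1 := ProbabilityTheory.lintegral_mul_eq_lintegral_mul_lintegral_of_indepFun
        (hχmeas b) (hΨmeas b) (hindΨ b)
      have h2 : ∫⁻ ω, (if J (k + 1) ω = b then (1:ℝ≥0∞) else 0) ∂μ
          = μ {ω | J (k + 1) ω = b} := by
        have hind : (fun ω => if J (k + 1) ω = b then (1:ℝ≥0∞) else 0)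
            = fun ω => Set.indicator {ω | J (k + 1) ω = b} (fun _ => 1) ω := by
          funext ω
          rw [Set.indicator_apply]
          rfl
        rw [hind, lintegral_indicator (show MeasurableSet {ω | J (k + 1) ω = b} from
          (hJmeas (k + 1)) (measurableSet_singleton b)), setLIntegral_one]
      calc ∫⁻ ω, (if J (k + 1) ω = b then (1:ℝ≥0∞) else 0) * Ψ b ω ∂μ
          = (∫⁻ ω, (if J (k + 1) ω = b then (1:ℝ≥0∞) else 0) ∂μ) * ∫⁻ ω, Ψ b ω ∂μ := h1
        _ = (m : ℝ≥0∞)⁻¹ * ∫⁻ ω, Ψ b ω ∂μ := by rw [h2, hJunif]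
    -- put everything together
    simp only [he]
    calc (∫⁻ ω, ((‖y (k + 1 + 1) ω - gS (x (k + 1) ω)‖₊ : ℝ≥0∞)) ^ 2 ∂μ)
        = ∑ b, ∫⁻ ω, (if J (k + 1) ω = b then (1:ℝ≥0∞) else 0) * Ψ b ω ∂μ := hsplit
      _ = ∑ b, (m : ℝ≥0∞)⁻¹ * ∫⁻ ω, Ψ b ω ∂μ := Finset.sum_congr rfl (fun b _ => hterm b)
      _ = (m : ℝ≥0∞)⁻¹ * ∑ b, ∫⁻ ω, Ψ b ω ∂μ := by rw [Finset.mul_sum]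
      _ = (m : ℝ≥0∞)⁻¹ * ∫⁻ ω, ∑ b, Ψ b ω ∂μ := by
          rw [← lintegral_finset_sum _ (fun b _ => hΨmeas b)]
      _ ≤ (m : ℝ≥0∞)⁻¹ * ∫⁻ ω, ENNReal.ofReal ((m : ℝ) * (q * ‖A ω‖ ^ 2 + sc)) ∂μ := by
          apply mul_le_mul_right
          apply lintegral_mono
          intro ω
          simp only [hΨ]
          rw [← ENNReal.ofReal_sum_of_nonneg (fun b _ => by positivity)]
          apply ENNReal.ofReal_le_ofReal
          have h2 := hptid ω
          have h3 : (m : ℝ) * (q * ‖A ω‖ ^ 2 + sc)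
              = (m : ℝ) * (q * ‖A ω‖ ^ 2) + (m : ℝ) * sc := by ring
          rw [h3]
          linarith [hζsq ω, h2]
      _ = (m : ℝ≥0∞)⁻¹ * ((m : ℝ≥0∞) * ∫⁻ ω, ENNReal.ofReal (q * ‖A ω‖ ^ 2 + sc) ∂μ) := by
          rw [← lintegral_const_mul' _ _ hmnetop]
          congr 1
          apply lintegral_congr
          intro ω
          rw [ENNReal.ofReal_mul hm0.le, ENNReal.ofReal_natCast]
      _ = ∫⁻ ω, ENNReal.ofReal (q * ‖A ω‖ ^ 2 + sc) ∂μ := by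
          rw [← mul_assoc, ENNReal.inv_mul_cancel hmne hmnetop, one_mul]
      _ = ∫⁻ ω, (ENNReal.ofReal q * ENNReal.ofReal (‖A ω‖ ^ 2) + ENNReal.ofReal sc) ∂μ := by
          apply lintegral_congr
          intro ω
          rw [ENNReal.ofReal_add (by positivity) hsc0, ENNReal.ofReal_mul hq0]
      _ = ENNReal.ofReal q * (∫⁻ ω, ENNReal.ofReal (‖A ω‖ ^ 2) ∂μ) + ENNReal.ofReal sc := by
          rw [lintegral_add_right _ measurable_const, lintegral_const, measure_univ, mul_one,
            lintegral_const_mul' _ _ ENNReal.ofReal_ne_top]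
      _ = ENNReal.ofReal q * (∫⁻ ω, ((‖y (k + 1) ω - gS (x k ω)‖₊ : ℝ≥0∞)) ^ 2 ∂μ)
          + ENNReal.ofReal sc := by
          congr 1
          congr 1
          apply lintegral_congr
          intro ω
          simp only [hA]
          rw [hnn]
  have hunroll : ∀ t, e t ≤ ENNReal.ofReal (q ^ t) * e 0 + ENNReal.ofReal Cc := by
    intro t
    induction t with
    | zero => simpa using le_add_right le_rfl
    | succ k ih =>
      have step1 : e (k + 1) ≤ ENNReal.ofReal q * (ENNReal.ofReal (q ^ k) * e 0
          + ENNReal.ofReal Cc) + ENNReal.ofReal sc :=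
        le_trans (hrec k) (add_le_add_left (mul_le_mul_right ih _) _)
      have hqC : q * Cc + sc = Cc := by
        have h2b : (2:ℝ) - β ≠ 0 := by linarith
        rw [hCc, hq]
        field_simp
        ring
      calc e (k + 1) ≤ ENNReal.ofReal q * (ENNReal.ofReal (q ^ k) * e 0
            + ENNReal.ofReal Cc) + ENNReal.ofReal sc := step1
        _ = ENNReal.ofReal (q ^ (k+1)) * e 0
            + (ENNReal.ofReal (q * Cc) + ENNReal.ofReal sc) := by
            rw [mul_add, ← mul_assoc, ← ENNReal.ofReal_mul hq0, ← ENNReal.ofReal_mul hq0,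
              ← pow_succ']
            ring
        _ = ENNReal.ofReal (q ^ (k+1)) * e 0 + ENNReal.ofReal Cc := by
            rw [← ENNReal.ofReal_add (by positivity) hsc0, hqC]
  intro t ht c hc
  have htβ : (0:ℝ) < (t : ℝ) * β := by
    have : (1:ℝ) ≤ (t:ℝ) := by exact_mod_cast ht
    nlinarith
  have hqt : q ^ t ≤ (c / Real.exp 1) ^ c * ((t : ℝ) * β) ^ (-c) := by
    have h1 : q ^ t ≤ (1 - β) ^ t := by
      rw [hq, ← pow_mul]
      exact pow_le_pow_of_le_one hβle (by linarith) (by omega)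
    have h2 : (1 - β) ^ t ≤ Real.exp (-β) ^ t := by
      apply pow_le_pow_left₀ hβle
      linarith [Real.add_one_le_exp (-β)]
    have h3 : Real.exp (-β) ^ t = Real.exp (-((t:ℝ) * β)) := by
      rw [← Real.exp_nat_mul]
      ring_nf
    have h4 := scsc_exp_bound hc htβ
    calc q ^ t ≤ (1 - β) ^ t := h1
      _ ≤ Real.exp (-β) ^ t := h2
      _ = Real.exp (-((t:ℝ) * β)) := h3
      _ ≤ (c / Real.exp 1) ^ c * ((t : ℝ) * β) ^ (-c) := h4
  have hCle : Cc ≤ K / β + 2 * Vg * β := by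
    rw [hCc, hsc, hq]
    exact scsc_C_le hβ0 hβ1 hVg0 hK0
  calc ∫⁻ ω, (‖y (t + 1) ω - gS (x t ω)‖₊ : ℝ≥0∞) ^ 2 ∂μ = e t := rfl
    _ ≤ ENNReal.ofReal (q ^ t) * e 0 + ENNReal.ofReal Cc := hunroll t
    _ ≤ ENNReal.ofReal ((c / Real.exp 1) ^ c * ((t : ℝ) * β) ^ (-c)) * e 0
        + ENNReal.ofReal (K / β + 2 * Vg * β) :=
      add_le_add (mul_le_mul_left (ENNReal.ofReal_le_ofReal hqt) _)
        (ENNReal.ofReal_le_ofReal hCle)
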